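/- Fix an integer n ≥ 1 and a constant c > 0. Let β : (0,∞) → ℝ be a differentiable function with β′(r) = −(1 + c r^{2n−2})^{−1/2} for all r > 0. Then −1 < β′(r) < 0, β is twice differentiable, and β′′(r)/(1 − (β′(r))²) + (n−1)β′(r)/r = 0 for all r > 0. Equivalently, the rotationally symmetric function b(x) = β(|x|) on ℝⁿ∖{0} satisfies the Euclidean maximal spacelike hypersurface equation (δ^{ij} + b_i b_j/(1 − |∇b|²)) b_{ij} = 0, where b_i = ∂_i b, b_{ij} = ∂_i∂_j b and |∇b|² = Σ_i b_i². -/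

import Mathlib

/- STATEMENT 1: The rotationally symmetric profile β with
β′(r) = −(1 + c r^{2n−2})^{−1/2} satisfies −1 < β′ < 0, is twice differentiable,
and solves the maximal spacelike hypersurface ODE
β″/(1 − (β′)²) + (n−1)β′/r = 0 on (0,∞). -/
theorem stmt_1 (n : ℕ) (hn : 1 ≤ n) (c : ℝ) (hc : 0 < c) (β : ℝ → ℝ)
    (hβ : ∀ r : ℝ, 0 < r →
      HasDerivAt β (-(Real.sqrt (1 + c * r ^ (2 * n - 2)))⁻¹) r) :
    ∀ r : ℝ, 0 < r →
      (-1 < deriv β r ∧ deriv β r < 0) ∧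
      ∃ d : ℝ, HasDerivAt (deriv β) d r ∧
        d / (1 - deriv β r ^ 2) + ((n : ℝ) - 1) * deriv β r / r = 0 := by
  intro r hr
  set m := 2 * n - 2 with hm
  have hderiv : ∀ s : ℝ, 0 < s → deriv β s = -(Real.sqrt (1 + c * s ^ m))⁻¹ :=
    fun s hs => (hβ s hs).deriv
  have hrm : (0:ℝ) < r ^ m := pow_pos hr m
  have hu1 : (1:ℝ) < 1 + c * r ^ m := by nlinarith
  have hu : (0:ℝ) < 1 + c * r ^ m := by linarith
  set S := Real.sqrt (1 + c * r ^ m) with hS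
  have hSsq : S ^ 2 = 1 + c * r ^ m := Real.sq_sqrt hu.le
  have hSnn : 0 ≤ S := Real.sqrt_nonneg _
  have hS1 : 1 < S := by nlinarith
  have hS0 : 0 < S := by linarith
  have hβ' : deriv β r = -S⁻¹ := hderiv r hr
  have hSinv : S⁻¹ < 1 := by
    rw [inv_lt_one_iff₀]; right; exact hS1
  refine ⟨⟨?_, ?_⟩, ?_⟩
  · rw [hβ']; linarith
  · rw [hβ']; simp [inv_pos.mpr hS0]
  · -- build second derivative
    have h1 : HasDerivAt (fun x : ℝ => 1 + c * x ^ m) (c * (m * r ^ (m - 1))) r :=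
      ((hasDerivAt_pow m r).const_mul c).const_add 1
    have h2 : HasDerivAt (fun x : ℝ => Real.sqrt (1 + c * x ^ m))
        (c * (m * r ^ (m - 1)) / (2 * S)) r := h1.sqrt (ne_of_gt hu)
    have h3 : HasDerivAt (fun x : ℝ => -(Real.sqrt (1 + c * x ^ m))⁻¹)
        (-(-(c * (m * r ^ (m - 1)) / (2 * S)) / S ^ 2)) r := (h2.inv (ne_of_gt hS0)).neg
    have heq : deriv β =ᶠ[nhds r] fun x : ℝ => -(Real.sqrt (1 + c * x ^ m))⁻¹ := by
      filter_upwards [isOpen_Ioi.mem_nhds (show r ∈ Set.Ioi 0 from hr)] with s hs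
      exact hderiv s hs
    have h4 : HasDerivAt (deriv β) (-(-(c * (m * r ^ (m - 1)) / (2 * S)) / S ^ 2)) r :=
      h3.congr_of_eventuallyEq heq
    refine ⟨_, h4, ?_⟩
    rw [hβ']
    have hb2 : (-S⁻¹) ^ 2 = (1 + c * r ^ m)⁻¹ := by
      rw [neg_pow, ← hSsq]; field_simp
    rw [hb2]
    rcases eq_or_lt_of_le hn with h | h
    · -- n = 1, m = 0
      have : m = 0 := by omega
      simp only [this, pow_zero, Nat.cast_zero, zero_mul, mul_zero, neg_zero,
        zero_div, neg_neg, zero_add, ← h, Nat.cast_one, sub_self, mul_neg]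
    · -- n ≥ 2
      have hm1 : m - 1 = 2 * n - 3 := by omega
      have hmm : m = (2 * n - 3) + 1 := by omega
      have hcast : (m : ℝ) = 2 * n - 2 := by
        have h2 : (2:ℕ) ≤ 2 * n := by omega
        rw [hm, Nat.cast_sub h2]; push_cast; ring
      rw [hcast, hm1, hmm]
      have hrp : (0:ℝ) < r ^ (2 * n - 3) := pow_pos hr _
      have hu' : (0:ℝ) < 1 + c * r ^ ((2*n-3)+1) := by
        rw [← hmm]; exact hu
      have hden : 1 - (1 + c * r ^ ((2*n-3)+1))⁻¹ ≠ 0 := by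
        have := inv_lt_one_of_one_lt₀ (show (1:ℝ) < 1 + c * r ^ ((2*n-3)+1) by rw [← hmm]; exact hu1)
        intro hz; linarith
      rw [pow_succ]
      have hSsq' : S ^ 2 = 1 + c * (r ^ (2*n-3) * r) := by
        rw [hSsq, hmm, pow_succ]
      field_simp
      linear_combination (1 - (n:ℝ)) * (c * (r ^ (2*n-3) * r)) * hSsq'
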